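/- Let c_i^ℓ ∈ ℝ for i ∈ {0,...,N}, ℓ ∈ L be arbitrary costs. Define the iterative transformation, for i from N down to 0: c_{i-1}^f ← c_{i-1}^f + max_{ℓ'} c_i^{ℓ'} and c_i^ℓ ← c_i^ℓ − max_{ℓ'} c_i^{ℓ'} for all ℓ (with the update at i = 0 adding the constant max_{ℓ'} c_0^{ℓ'} to a global offset). Then after the transformation all costs c_i^ℓ are non-positive, and for every assignment of binary variables satisfying the visibility consistency identity y_{i-1}^f = ∑_{ℓ∈L} y_i^ℓ (with y_{-1}^f = 1), the value ∑_{i,ℓ} c_i^ℓ y_i^ℓ changes by exactly the accumulated constant, independent of the assignment. -/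

import Mathlib

/-- One step of the cost transformation at position `i`: subtract
`max_{ℓ'} c_i^{ℓ'}` from all costs at position `i` and add it to the
free-space cost at position `i-1` (at `i = 0` the shifted amount becomes a
global constant, which disappears since there is no position `-1`). -/
noncomputable def rayStep (L : ℕ) (c : ℕ → Fin (L + 1) → ℝ) (i : ℕ) :
    ℕ → Fin (L + 1) → ℝ := fun j ℓ =>
  if j = i then c i ℓ - Finset.univ.sup' Finset.univ_nonempty (c i)
  else if j + 1 = i ∧ ℓ = 0 then c j ℓ + Finset.univ.sup' Finset.univ_nonempty (c i)
  else c j ℓ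

/-- Apply the steps for `i = N, N-1, …, 0` in this order. -/
noncomputable def rayTransform (L : ℕ) : ℕ → (ℕ → Fin (L + 1) → ℝ) → ℕ → Fin (L + 1) → ℝ
  | 0, c => rayStep L c 0
  | k + 1, c => rayTransform L k (rayStep L c (k + 1))

lemma rayTransform_high (L k : ℕ) (c : ℕ → Fin (L + 1) → ℝ) (j : ℕ) (h : k < j) :
    rayTransform L k c j = c j := by
  induction k generalizing c with
  | zero =>
      funext ℓ
      simp only [rayTransform, rayStep]
      rw [if_neg (by omega), if_neg (by omega)]
  | succ k ih =>
      funext ℓ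
      rw [show rayTransform L (k+1) c = rayTransform L k (rayStep L c (k+1)) from rfl,
        ih _ (by omega)]
      simp only [rayStep]
      rw [if_neg (by omega), if_neg (by omega)]

/-- after the transformation all costs at positions `0,…,N` are
non-positive, and on every binary assignment satisfying the visibility
consistency identity `y_{i-1}^f = ∑_ℓ y_i^ℓ` (with `y_{-1}^f = 1`) the objective
changes by exactly a constant `K` independent of the assignment. -/
theorem stmt4 (L N : ℕ) (c : ℕ → Fin (L + 1) → ℝ) :
    (∀ i ≤ N, ∀ ℓ, rayTransform L N c i ℓ ≤ 0) ∧
    ∃ K : ℝ, ∀ y : ℕ → Fin (L + 1) → ℝ,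
      (∀ i ℓ, y i ℓ = 0 ∨ y i ℓ = 1) →
      (∑ ℓ, y 0 ℓ) = 1 →
      (∀ i, i + 1 ≤ N → (∑ ℓ, y (i + 1) ℓ) = y i 0) →
      (∑ i ∈ Finset.range (N + 1), ∑ ℓ, rayTransform L N c i ℓ * y i ℓ)
        = (∑ i ∈ Finset.range (N + 1), ∑ ℓ, c i ℓ * y i ℓ) + K := by
  induction N generalizing c with
  | zero =>
      constructor
      · intro i hi ℓ
        interval_cases i
        simp only [rayTransform, rayStep, if_pos rfl, if_true]
        exact sub_nonpos.mpr (Finset.le_sup' (c 0) (Finset.mem_univ ℓ))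
      · refine ⟨-(Finset.univ.sup' Finset.univ_nonempty (c 0)), fun y hbin hy0 hcons => ?_⟩
        rw [Finset.sum_range_one, Finset.sum_range_one]
        simp only [rayTransform, rayStep, if_pos rfl, if_true]
        rw [Finset.sum_congr rfl (fun ℓ _ => sub_mul (c 0 ℓ) _ (y 0 ℓ)),
          Finset.sum_sub_distrib, ← Finset.mul_sum, hy0]
        ring
  | succ N ih =>
      set M := Finset.univ.sup' Finset.univ_nonempty (c (N + 1)) with hM
      set d := rayStep L c (N + 1) with hd
      obtain ⟨ih1, K', ihK⟩ := ih d
      have hhigh : rayTransform L N d (N + 1) = d (N + 1) :=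
        rayTransform_high L N d (N + 1) (by omega)
      have htop : ∀ ℓ, rayTransform L N d (N + 1) ℓ = c (N + 1) ℓ - M := by
        intro ℓ
        rw [hhigh]
        simp [hd, rayStep, hM]
      constructor
      · intro i hi ℓ
        rcases Nat.lt_or_ge i (N + 1) with h | h
        · exact ih1 i (by omega) ℓ
        · have : i = N + 1 := by omega
          subst this
          rw [show rayTransform L (N+1) c = rayTransform L N d from rfl, htop ℓ]
          exact sub_nonpos.mpr (Finset.le_sup' (c (N + 1)) (Finset.mem_univ ℓ))
      · refine ⟨K', fun y hbin hy0 hcons => ?_⟩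
        have hlow : (∑ i ∈ Finset.range (N + 1), ∑ ℓ, rayTransform L N d i ℓ * y i ℓ)
            = (∑ i ∈ Finset.range (N + 1), ∑ ℓ, d i ℓ * y i ℓ) + K' :=
          ihK y hbin hy0 (fun i hi => hcons i (by omega))
        have hdlow : (∑ i ∈ Finset.range (N + 1), ∑ ℓ, d i ℓ * y i ℓ)
            = (∑ i ∈ Finset.range (N + 1), ∑ ℓ, c i ℓ * y i ℓ) + M * y N 0 := by
          rw [Finset.sum_range_succ, Finset.sum_range_succ]
          have h1 : ∀ i ∈ Finset.range N, (∑ ℓ, d i ℓ * y i ℓ) = ∑ ℓ, c i ℓ * y i ℓ := by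
            intro i hi
            simp only [Finset.mem_range] at hi
            refine Finset.sum_congr rfl fun ℓ _ => ?_
            simp only [hd, rayStep]
            rw [if_neg (by omega), if_neg (by simp; omega)]
          rw [Finset.sum_congr rfl h1]
          have h2 : ∀ ℓ : Fin (L + 1), d N ℓ = c N ℓ + (if ℓ = 0 then M else 0) := by
            intro ℓ
            simp only [hd, rayStep]
            rw [if_neg (by omega)]
            by_cases hℓ : ℓ = 0
            · rw [if_pos (by simp [hℓ]), if_pos hℓ]
            · rw [if_neg (by simp [hℓ]), if_neg hℓ, add_zero]
          have h3 : (∑ ℓ, d N ℓ * y N ℓ) = (∑ ℓ, c N ℓ * y N ℓ) + M * y N 0 := by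
            rw [Finset.sum_congr rfl (fun ℓ _ => by rw [h2 ℓ, add_mul]),
              Finset.sum_add_distrib]
            congr 1
            rw [Finset.sum_congr rfl (fun ℓ _ => by rw [ite_mul, zero_mul])]
            simp
          rw [h3]; ring
        have htopsum : (∑ ℓ, rayTransform L N d (N + 1) ℓ * y (N + 1) ℓ)
            = (∑ ℓ, c (N + 1) ℓ * y (N + 1) ℓ) - M * y N 0 := by
          rw [Finset.sum_congr rfl (fun ℓ _ => by rw [htop ℓ, sub_mul]),
            Finset.sum_sub_distrib, ← Finset.mul_sum, hcons N (by omega)]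
        rw [show rayTransform L (N+1) c = rayTransform L N d from rfl,
          Finset.sum_range_succ (fun i => ∑ ℓ, rayTransform L N d i ℓ * y i ℓ) (N + 1),
          Finset.sum_range_succ (fun i => ∑ ℓ, c i ℓ * y i ℓ) (N + 1),
          hlow, hdlow, htopsum]
        ring
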